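/- (Appendix, equations (a.2)–(a.3), first identity.) J(1,0) = π³ · ∫₀^∞ e^{−2λ}·(I₀(λ/2))² dλ. -/

import Mathlib

open MeasureTheory

noncomputable abbrev R2 : Type := EuclideanSpace ℝ (Fin 2)

/-- The modified Bessel function of order zero. -/
noncomputable def I0 (x : ℝ) : ℝ :=
  (1 / Real.pi) * ∫ θ in (0:ℝ)..Real.pi, Real.exp (x * Real.cos θ)

/-- The function `J(μ₁,μ₂)` of (3.65). -/
noncomputable def Jfun (μ₁ μ₂ : ℝ) : ℝ :=
  ∫ q₂ : R2, (∫ q₁ : R2,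
    Real.exp (-(1/2) * (μ₁ ^ 2 + μ₂ ^ 2) * ‖q₁ + q₂‖ ^ 2
        - ‖μ₂ • q₁ - μ₁ • q₂‖ ^ 2 - ‖q₁‖ ^ 2 / 2) *
      I0 (|μ₁ - μ₂| * ‖q₁ + q₂‖ * ‖μ₂ • q₁ - μ₁ • q₂‖)) ^ 2

open scoped RealInnerProductSpace

noncomputable def ee : ℂ ≃ₗᵢ[ℝ] R2 := Complex.orthonormalBasisOneI.repr

lemma inner_ee (u v : ℂ) : ⟪ee u, ee v⟫ = (u * (starRingEnd ℂ) v).re := by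
  simp [ee, PiLp.inner_apply, Complex.orthonormalBasisOneI_repr_apply, Fin.sum_univ_two,
    Complex.mul_re]
  ring

lemma norm_ee (u : ℂ) : ‖ee u‖ = ‖u‖ := by
  rw [ee.norm_map]

lemma circle_int (x : ℝ) : ∫ θ in (0:ℝ)..(2*Real.pi), Real.exp (x * Real.cos θ)
    = 2 * Real.pi * I0 x := by
  have h1 : ∫ θ in (0:ℝ)..(2*Real.pi), Real.exp (x * Real.cos θ)
      = (∫ θ in (0:ℝ)..Real.pi, Real.exp (x * Real.cos θ))
        + ∫ θ in Real.pi..(2*Real.pi), Real.exp (x * Real.cos θ) := by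
    rw [intervalIntegral.integral_add_adjacent_intervals] <;>
      exact (Continuous.intervalIntegrable (by continuity) _ _)
  have h2 : ∫ θ in Real.pi..(2*Real.pi), Real.exp (x * Real.cos θ)
      = ∫ θ in (0:ℝ)..Real.pi, Real.exp (x * Real.cos θ) := by
    calc ∫ θ in Real.pi..(2*Real.pi), Real.exp (x * Real.cos θ)
        = ∫ θ in (2*Real.pi - Real.pi)..(2*Real.pi - 0), Real.exp (x * Real.cos θ) := by
          rw [show 2*Real.pi - Real.pi = Real.pi by ring, sub_zero]
      _ = ∫ θ in (0:ℝ)..Real.pi, Real.exp (x * Real.cos (2*Real.pi - θ)) :=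
          (intervalIntegral.integral_comp_sub_left
            (fun t => Real.exp (x * Real.cos t)) (2*Real.pi)).symm
      _ = ∫ θ in (0:ℝ)..Real.pi, Real.exp (x * Real.cos θ) := by
          simp only [Real.cos_two_pi_sub]
  have hπ : Real.pi ≠ 0 := Real.pi_ne_zero
  rw [h1, h2, I0]
  field_simp
  ring

lemma circle_int_rot (c : ℂ) :
    ∫ θ in (0:ℝ)..(2*Real.pi), Real.exp ((c * Complex.exp (-(θ:ℂ) * Complex.I)).re)
      = 2 * Real.pi * I0 ‖c‖ := by
  set r : ℝ := ‖c‖ with hr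
  set φ : ℝ := Complex.arg c with hφ
  have key : ∀ θ : ℝ, (c * Complex.exp (-(θ:ℂ) * Complex.I)).re = r * Real.cos (θ - φ) := by
    intro θ
    conv_lhs => rw [← Complex.norm_mul_exp_arg_mul_I c]
    rw [mul_assoc, ← Complex.exp_add, ← hr, ← hφ]
    have : (φ:ℂ) * Complex.I + -(θ:ℂ) * Complex.I = ((φ - θ : ℝ) : ℂ) * Complex.I := by
      push_cast; ring
    rw [this, Complex.re_ofReal_mul, Complex.exp_ofReal_mul_I_re]
    rw [show φ - θ = -(θ - φ) by ring, Real.cos_neg]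
  simp only [key]
  have hper : Function.Periodic (fun θ : ℝ => Real.exp (r * Real.cos θ)) (2*Real.pi) :=
    fun θ => by simp [Real.cos_add_two_pi]
  have h1 : ∫ θ in (0:ℝ)..(2*Real.pi), Real.exp (r * Real.cos (θ - φ))
      = ∫ θ in (0 - φ)..(2*Real.pi - φ), Real.exp (r * Real.cos θ) :=
    intervalIntegral.integral_comp_sub_right (fun t => Real.exp (r * Real.cos t)) φ
  have h2 : ∫ θ in (-φ)..(-φ + 2*Real.pi), Real.exp (r * Real.cos θ)
      = ∫ θ in (0:ℝ)..(0 + 2*Real.pi), Real.exp (r * Real.cos θ) :=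
    hper.intervalIntegral_add_eq (-φ) 0
  rw [h1, show (0:ℝ) - φ = -φ by ring, show 2*Real.pi - φ = -φ + 2*Real.pi by ring, h2,
    zero_add]
  exact circle_int r

lemma gaussR2 (w : R2) :
    ∫ v : R2, Real.exp (-‖v‖^2 + ⟪w, v⟫) = Real.pi * Real.exp (‖w‖^2/4) := by
  have h := GaussianFourier.integral_cexp_neg_mul_sq_norm_add (V := R2) (b := 1)
    (by norm_num) 1 w
  have hfr : (Module.finrank ℝ R2 : ℂ) = 2 := by
    norm_num [finrank_euclideanSpace_fin]
  rw [hfr, show ((2:ℂ)/2) = 1 by norm_num, Complex.cpow_one] at h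
  apply Complex.ofReal_injective
  calc ((∫ v : R2, Real.exp (-‖v‖^2 + ⟪w, v⟫) : ℝ) : ℂ)
      = ∫ v : R2, ((Real.exp (-‖v‖^2 + ⟪w, v⟫) : ℝ) : ℂ) := integral_ofReal.symm
    _ = ∫ v : R2, Complex.exp (-(1:ℂ) * (‖v‖:ℂ)^2 + 1 * ((⟪w, v⟫ : ℝ) : ℂ)) := by
        congr 1; funext v; rw [Complex.ofReal_exp]; congr 1; push_cast; ring
    _ = (↑Real.pi / 1) * Complex.exp ((1:ℂ)^2 * (‖w‖:ℂ)^2/(4*1)) := h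
    _ = ((Real.pi * Real.exp (‖w‖^2/4) : ℝ) : ℂ) := by
        push_cast
        norm_num

lemma gauss_shift (q₂ w : R2) (hw : ‖w‖ = ‖q₂‖) :
    ∫ q₁ : R2, Real.exp (-(1/2) * ‖q₁ + q₂‖^2 - ‖q₂‖^2 - ‖q₁‖^2/2 + ⟪q₁ + q₂, w⟫)
      = Real.pi * Real.exp (⟪q₂, w⟫/2 - ‖q₂‖^2) := by
  have key : ∀ q₁ : R2, -(1/2) * ‖q₁ + q₂‖^2 - ‖q₂‖^2 - ‖q₁‖^2/2 + ⟪q₁ + q₂, w⟫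
      = (-‖q₁‖^2 + ⟪w - q₂, q₁⟫) + (⟪q₂, w⟫ - (3/2) * ‖q₂‖^2) := by
    intro q₁
    rw [norm_add_sq_real, inner_add_left, inner_sub_left,
      real_inner_comm w q₁, real_inner_comm q₂ q₁]
    ring
  have split : ∀ q₁ : R2, Real.exp ((-‖q₁‖^2 + ⟪w - q₂, q₁⟫) + (⟪q₂, w⟫ - (3/2) * ‖q₂‖^2))
      = Real.exp (-‖q₁‖^2 + ⟪w - q₂, q₁⟫) * Real.exp (⟪q₂, w⟫ - (3/2) * ‖q₂‖^2) :=
    fun q₁ => Real.exp_add _ _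
  simp only [key, split]
  rw [MeasureTheory.integral_mul_const, gaussR2 (w - q₂), norm_sub_sq_real, hw,
    real_inner_comm w q₂, mul_assoc, ← Real.exp_add]
  congr 2
  ring

lemma integrable_gauss : Integrable (fun v : R2 => Real.exp (-‖v‖^2/2)) := by
  have h := GaussianFourier.integrable_cexp_neg_mul_sq_norm_add (V := R2) (b := (1/2:ℂ))
    (by norm_num) 0 0
  apply h.re.congr
  filter_upwards with v
  have : -(1/2:ℂ)*(‖v‖:ℂ)^2 + 0 * ((⟪(0:R2), v⟫ : ℝ) : ℂ) = ((-‖v‖^2/2 : ℝ) : ℂ) := by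
    push_cast; ring
  simp only [this, ← Complex.ofReal_exp]
  rfl

lemma hW_norm (q₂ : R2) (θ : ℝ) :
    ‖ee (Complex.exp ((θ:ℂ) * Complex.I) * ee.symm q₂)‖ = ‖q₂‖ := by
  rw [norm_ee, norm_mul, Complex.norm_exp_ofReal_mul_I, one_mul, ← norm_ee,
    ee.apply_symm_apply]

lemma hW_inner (q₂ : R2) (a : R2) (θ : ℝ) :
    ⟪a, ee (Complex.exp ((θ:ℂ) * Complex.I) * ee.symm q₂)⟫
      = ((ee.symm a * (starRingEnd ℂ) (ee.symm q₂)) * Complex.exp (-(θ:ℂ) * Complex.I)).re := by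
  conv_lhs => rw [← ee.apply_symm_apply a]
  rw [inner_ee, map_mul]
  have : (starRingEnd ℂ) (Complex.exp ((θ:ℂ)*Complex.I)) = Complex.exp (-(θ:ℂ)*Complex.I) := by
    rw [← Complex.exp_conj]
    congr 1
    simp [Complex.conj_I]
  rw [this]
  ring_nf


lemma hI0_rep (q₂ a : R2) :
    I0 (‖a‖ * ‖q₂‖) = (2*Real.pi)⁻¹ *
      ∫ θ in (0:ℝ)..(2*Real.pi), Real.exp ⟪a, ee (Complex.exp ((θ:ℂ) * Complex.I) * ee.symm q₂)⟫ := by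
  simp only [hW_inner]
  rw [circle_int_rot (ee.symm a * (starRingEnd ℂ) (ee.symm q₂))]
  rw [norm_mul, Complex.norm_conj]
  have h1 : ‖ee.symm a‖ = ‖a‖ := by rw [← norm_ee, ee.apply_symm_apply]
  have h2 : ‖ee.symm q₂‖ = ‖q₂‖ := by rw [← norm_ee, ee.apply_symm_apply]
  rw [h1, h2, inv_mul_cancel_left₀ Real.two_pi_pos.ne']

lemma hinner2 (q₂ : R2) (θ : ℝ) :
    ⟪q₂, ee (Complex.exp ((θ:ℂ) * Complex.I) * ee.symm q₂)⟫ = ‖q₂‖^2 * Real.cos θ := by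
  rw [hW_inner, Complex.mul_conj]
  have h2 : Complex.normSq (ee.symm q₂) = ‖q₂‖^2 := by
    rw [← Complex.sq_norm, ← norm_ee, ee.apply_symm_apply]
  have : (-(θ:ℂ) * Complex.I) = ((-θ : ℝ) : ℂ) * Complex.I := by push_cast; ring
  rw [this, Complex.re_ofReal_mul, Complex.exp_ofReal_mul_I_re, Real.cos_neg, h2]

lemma inner_step (q₂ : R2) :
    ∫ q₁ : R2, Real.exp (-(1/2) * ‖q₁ + q₂‖^2 - ‖q₂‖^2 - ‖q₁‖^2/2) * I0 (‖q₁ + q₂‖ * ‖q₂‖)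
      = Real.pi * Real.exp (-‖q₂‖^2) * I0 (‖q₂‖^2/2) := by
  have hπ : Real.pi ≠ 0 := Real.pi_ne_zero
  set W : ℝ → R2 := fun θ => ee (Complex.exp ((θ:ℂ) * Complex.I) * ee.symm q₂) with hW
  set f : R2 → ℝ → ℝ := fun q₁ θ =>
    Real.exp (-(1/2) * ‖q₁ + q₂‖^2 - ‖q₂‖^2 - ‖q₁‖^2/2) * Real.exp ⟪q₁ + q₂, W θ⟫ with hf
  have hWcont : Continuous W :=
    ee.continuous.comp ((Complex.continuous_exp.comp
      (Complex.continuous_ofReal.mul continuous_const)).mul continuous_const)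
  have hcont : Continuous (Function.uncurry f) := by
    apply Continuous.mul
    · apply Real.continuous_exp.comp
      fun_prop
    · apply Real.continuous_exp.comp
      exact Continuous.inner (continuous_fst.add continuous_const) (hWcont.comp continuous_snd)
  have hbound : ∀ p : R2 × ℝ, ‖f p.1 p.2‖
      ≤ Real.exp (‖q₂‖^2/2) * Real.exp (-‖p.1‖^2/2) := by
    intro p
    rw [hf]
    simp only
    rw [Real.norm_eq_abs, _root_.abs_of_nonneg (by positivity), ← Real.exp_add, ← Real.exp_add]
    apply Real.exp_le_exp.mpr
    have h1 : ⟪p.1 + q₂, W p.2⟫ ≤ ‖p.1 + q₂‖ * ‖q₂‖ := by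
      calc ⟪p.1 + q₂, W p.2⟫ ≤ ‖p.1 + q₂‖ * ‖W p.2‖ := real_inner_le_norm _ _
        _ = ‖p.1 + q₂‖ * ‖q₂‖ := by rw [hW, hW_norm]
    nlinarith [sq_nonneg (‖p.1 + q₂‖ - ‖q₂‖)]
  have hint : Integrable (Function.uncurry f)
      (volume.prod (volume.restrict (Set.Ioc 0 (2*Real.pi)))) := by
    have hg : Integrable (fun p : R2 × ℝ => Real.exp (‖q₂‖^2/2) * Real.exp (-‖p.1‖^2/2))
        (volume.prod (volume.restrict (Set.Ioc 0 (2*Real.pi)))) := by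
      have := (integrable_gauss.const_mul (Real.exp (‖q₂‖^2/2))).mul_prod
        (integrable_const (μ := volume.restrict (Set.Ioc 0 (2*Real.pi))) (1:ℝ))
      simpa using this
    exact hg.mono' hcont.aestronglyMeasurable (Filter.Eventually.of_forall hbound)
  have step1 : ∀ q₁ : R2, Real.exp (-(1/2) * ‖q₁ + q₂‖^2 - ‖q₂‖^2 - ‖q₁‖^2/2)
        * I0 (‖q₁ + q₂‖ * ‖q₂‖)
      = (2*Real.pi)⁻¹ * ∫ θ in Set.Ioc (0:ℝ) (2*Real.pi), f q₁ θ := by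
    intro q₁
    rw [hI0_rep q₂ (q₁ + q₂), intervalIntegral.integral_of_le Real.two_pi_pos.le]
    rw [hf]
    simp only
    rw [MeasureTheory.integral_const_mul]
    ring
  have step2 : ∀ θ ∈ Set.Ioc (0:ℝ) (2*Real.pi), ∫ q₁ : R2, f q₁ θ
      = (Real.pi * Real.exp (-‖q₂‖^2)) * Real.exp ((‖q₂‖^2/2) * Real.cos θ) := by
    intro θ _
    have hc : ∀ q₁ : R2, f q₁ θ
        = Real.exp (-(1/2) * ‖q₁ + q₂‖^2 - ‖q₂‖^2 - ‖q₁‖^2/2 + ⟪q₁ + q₂, W θ⟫) :=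
      fun q₁ => (Real.exp_add _ _).symm
    simp only [hc]
    rw [gauss_shift q₂ (W θ) (hW_norm q₂ θ), hW, hinner2, mul_assoc, ← Real.exp_add]
    congr 2
    ring
  calc ∫ q₁ : R2, Real.exp (-(1/2) * ‖q₁ + q₂‖^2 - ‖q₂‖^2 - ‖q₁‖^2/2) * I0 (‖q₁ + q₂‖ * ‖q₂‖)
      = ∫ q₁ : R2, (2*Real.pi)⁻¹ * ∫ θ in Set.Ioc (0:ℝ) (2*Real.pi), f q₁ θ := by
        simp only [step1]
    _ = (2*Real.pi)⁻¹ * ∫ q₁ : R2, ∫ θ in Set.Ioc (0:ℝ) (2*Real.pi), f q₁ θ :=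
        MeasureTheory.integral_const_mul _ _
    _ = (2*Real.pi)⁻¹ * ∫ θ in Set.Ioc (0:ℝ) (2*Real.pi), ∫ q₁ : R2, f q₁ θ := by
        rw [MeasureTheory.integral_integral_swap hint]
    _ = (2*Real.pi)⁻¹ * ∫ θ in Set.Ioc (0:ℝ) (2*Real.pi),
          (Real.pi * Real.exp (-‖q₂‖^2)) * Real.exp ((‖q₂‖^2/2) * Real.cos θ) := by
        congr 1
        exact MeasureTheory.setIntegral_congr_fun measurableSet_Ioc step2
    _ = (2*Real.pi)⁻¹ * ((Real.pi * Real.exp (-‖q₂‖^2))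
          * ∫ θ in Set.Ioc (0:ℝ) (2*Real.pi), Real.exp ((‖q₂‖^2/2) * Real.cos θ)) := by
        rw [MeasureTheory.integral_const_mul]
    _ = Real.pi * Real.exp (-‖q₂‖^2) * I0 (‖q₂‖^2/2) := by
        rw [← intervalIntegral.integral_of_le Real.two_pi_pos.le, circle_int (‖q₂‖^2/2)]
        field_simp

/-- Appendix, equations (a.2)-(a.3), first identity:
`J(1,0) = π³ ∫₀^∞ e^{-2λ} (I₀(λ/2))² dλ`. -/
theorem J_one_zero :
    Jfun 1 0 = Real.pi ^ 3 * ∫ l in Set.Ioi (0:ℝ), Real.exp (-2 * l) * (I0 (l / 2)) ^ 2 := by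
  have h1 : Jfun 1 0
      = ∫ q₂ : R2, (fun r : ℝ => (Real.pi * Real.exp (-r^2) * I0 (r^2/2))^2) ‖q₂‖ := by
    rw [Jfun]
    congr 1
    funext q₂
    simp only
    rw [← inner_step q₂]
    congr 1
    apply MeasureTheory.integral_congr_ae
    filter_upwards with q₁
    simp only [zero_smul, one_smul, zero_sub, norm_neg]
    norm_num
  rw [h1, MeasureTheory.integral_fun_norm_addHaar volume
    (fun r : ℝ => (Real.pi * Real.exp (-r^2) * I0 (r^2/2))^2)]
  rw [finrank_euclideanSpace_fin]
  have hball : (volume (Metric.ball (0:R2) 1)).toReal = Real.pi := by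
    rw [EuclideanSpace.volume_ball]
    norm_num [Real.sq_sqrt Real.pi_pos.le, Real.Gamma_two]
    positivity
  rw [measureReal_def, hball]
  have hsub := MeasureTheory.integral_comp_rpow_Ioi_of_pos
    (g := fun l => Real.exp (-2*l) * (I0 (l/2))^2) (p := 2) two_pos
  rw [← hsub]
  rw [← MeasureTheory.integral_const_mul (Real.pi^3)]
  rw [smul_eq_mul, nsmul_eq_mul, ← MeasureTheory.integral_const_mul, ← MeasureTheory.integral_const_mul]
  apply MeasureTheory.setIntegral_congr_fun measurableSet_Ioi
  intro x hx
  simp only [smul_eq_mul]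
  have hx0 : (0:ℝ) < x := hx
  have e1 : x ^ ((2:ℝ) - 1) = x := by
    norm_num
  have e2 : x ^ (2:ℝ) = x^2 := by
    rw [show (2:ℝ) = ((2:ℕ):ℝ) by norm_num, Real.rpow_natCast]
  rw [e1, e2]
  have e3 : Real.exp (-x^2)^2 = Real.exp (-2*x^2) := by
    rw [← Real.exp_nat_mul]
    norm_num
  rw [mul_pow, mul_pow, e3]
  ring
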